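/- Let N ≥ 1, let n ≥ 1, and let c : [0,1] → M₂(ℂ) satisfy c(0) = I₂, c(1) = the 2×2 swap matrix [[0,1],[1,0]], and c(θ) unitary for every θ. Suppose k, i, n ∈ ℕ satisfy N ≤ k ≤ i − N and i ≤ n − N, and let ξ ∈ [0,1]. Then uⁿ_{k,n}(ξ) = U[σⁿ_{i,n}] · uⁿ_{k,i}(ξ) · U[σⁿ_{i,n}]. -/

import Mathlib

/-- Given a path `c : [0,1] → M₂(ℂ)`, the matrix `u_{(i j)}(θ) ∈ Mₙ(ℂ)` agreeing with
the identity except that its `(i,i)`, `(i,j)`, `(j,i)`, `(j,j)` entries are the entries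
of `c θ`.  (For `i = j` it is the identity matrix `Iₙ`.) -/
def uSwap {n : ℕ} (c : ℝ → Matrix (Fin 2) (Fin 2) ℂ) (i j : Fin n) (θ : ℝ) :
    Matrix (Fin n) (Fin n) ℂ :=
  if i = j then 1 else
    Matrix.of fun p q =>
      if p = i ∧ q = i then c θ 0 0
      else if p = i ∧ q = j then c θ 0 1
      else if p = j ∧ q = i then c θ 1 0
      else if p = j ∧ q = j then c θ 1 1
      else if p = q then 1 else 0

/-- `uⁿ_{j,k}(θ) := u_{(j-N+1, k-N+1)}(θ) · u_{(j-N+2, k-N+2)}(θ) ⋯ u_{(j,k)}(θ)`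
(`N` factors, in this order; all indices 1-based). -/
noncomputable def uNN (n N : ℕ) (c : ℝ → Matrix (Fin 2) (Fin 2) ℂ) (j k : ℕ)
    (hN : 1 ≤ N) (hj : N ≤ j) (hjk : j ≤ k) (hk : k ≤ n) (θ : ℝ) :
    Matrix (Fin n) (Fin n) ℂ :=
  (List.ofFn fun s : Fin N =>
    uSwap c (⟨j - N + (s : ℕ), by have := s.2; omega⟩ : Fin n)
      (⟨k - N + (s : ℕ), by have := s.2; omega⟩ : Fin n) θ).prod

/-- `σⁿ_{j,k} := (j-N+1 k-N+1)(j-N+2 k-N+2)⋯(j k)`, a product of `N` transpositions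
of `{1,…,n}` (1-based indices). -/
def sigmaNN (n N j k : ℕ) (hN : 1 ≤ N) (hj : N ≤ j) (hjk : j ≤ k) (hk : k ≤ n) :
    Equiv.Perm (Fin n) :=
  (List.ofFn fun s : Fin N =>
    Equiv.swap (⟨j - N + (s : ℕ), by have := s.2; omega⟩ : Fin n)
      (⟨k - N + (s : ℕ), by have := s.2; omega⟩ : Fin n)).prod

/-- The permutation matrix `U[π]`, with `(p,q)`-entry equal to `1` if `p = π q`
and `0` otherwise. -/
def permMat {n : ℕ} (π : Equiv.Perm (Fin n)) : Matrix (Fin n) (Fin n) ℂ :=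
  Matrix.of fun p q => if p = π q then 1 else 0

lemma prodSwap_fix {n : ℕ} : ∀ (N : ℕ) (a b : ℕ → Fin n) (x : Fin n),
    (∀ s, s < N → a s ≠ x) → (∀ s, s < N → b s ≠ x) →
    (List.ofFn fun s : Fin N => Equiv.swap (a s) (b s)).prod x = x := by
  intro N
  induction N with
  | zero => intro a b x _ _; simp
  | succ N ih =>
    intro a b x ha hb
    rw [List.ofFn_succ, List.prod_cons, Equiv.Perm.mul_apply]
    have h2 : (List.ofFn fun s : Fin N => Equiv.swap (a (s + 1)) (b (s + 1))).prod x = x :=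
      ih (fun s => a (s + 1)) (fun s => b (s + 1)) x
        (fun s hs => ha (s + 1) (by omega)) (fun s hs => hb (s + 1) (by omega))
    simp only [Fin.val_succ, Fin.val_zero] at h2 ⊢
    rw [h2]
    exact Equiv.swap_apply_of_ne_of_ne (Ne.symm (ha 0 (by omega))) (Ne.symm (hb 0 (by omega)))

lemma prodSwap_move {n : ℕ} : ∀ (N : ℕ) (a b : ℕ → Fin n),
    (∀ s t, s < N → t < N → a s ≠ b t) →
    (∀ s t, s < N → t < N → s ≠ t → a s ≠ a t) →
    (∀ s t, s < N → t < N → s ≠ t → b s ≠ b t) →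
    ∀ s₀, s₀ < N →
    (List.ofFn fun s : Fin N => Equiv.swap (a s) (b s)).prod (a s₀) = b s₀ := by
  intro N
  induction N with
  | zero => intro _ _ _ _ _ s₀ h; omega
  | succ N ih =>
    intro a b hab ha hb s₀ hs₀
    rw [List.ofFn_succ, List.prod_cons, Equiv.Perm.mul_apply]
    simp only [Fin.val_succ, Fin.val_zero]
    rcases Nat.eq_zero_or_pos s₀ with h0 | hpos
    · subst h0
      have hfix : (List.ofFn fun s : Fin N => Equiv.swap (a (s + 1)) (b (s + 1))).prod (a 0)
          = a 0 :=
        prodSwap_fix N _ _ _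
          (fun s hs => ha (s + 1) 0 (by omega) (by omega) (by omega))
          (fun s hs => Ne.symm (hab 0 (s + 1) (by omega) (by omega)))
      rw [hfix, Equiv.swap_apply_left]
    · obtain ⟨t₀, rfl⟩ : ∃ t₀, s₀ = t₀ + 1 := ⟨s₀ - 1, by omega⟩
      have hmove := ih (fun s => a (s + 1)) (fun s => b (s + 1))
        (fun s t hs ht => hab (s + 1) (t + 1) (by omega) (by omega))
        (fun s t hs ht hst => ha (s + 1) (t + 1) (by omega) (by omega) (by omega))
        (fun s t hs ht hst => hb (s + 1) (t + 1) (by omega) (by omega) (by omega))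
        t₀ (by omega)
      rw [hmove]
      exact Equiv.swap_apply_of_ne_of_ne (Ne.symm (hab 0 (t₀ + 1) (by omega) (by omega)))
        (Ne.symm (hb 0 (t₀ + 1) (by omega) (by omega) (by omega)))

lemma prodSwap_move' {n : ℕ} (N : ℕ) (a b : ℕ → Fin n)
    (hab : ∀ s t, s < N → t < N → a s ≠ b t)
    (ha : ∀ s t, s < N → t < N → s ≠ t → a s ≠ a t)
    (hb : ∀ s t, s < N → t < N → s ≠ t → b s ≠ b t)
    (s₀ : ℕ) (hs₀ : s₀ < N) :
    (List.ofFn fun s : Fin N => Equiv.swap (a s) (b s)).prod (b s₀) = a s₀ := by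
  have : (List.ofFn fun s : Fin N => Equiv.swap (a s) (b s))
      = (List.ofFn fun s : Fin N => Equiv.swap (b s) (a s)) := by
    congr 1; funext s; exact Equiv.swap_comm _ _
  rw [this]
  exact prodSwap_move N b a (fun s t hs ht => Ne.symm (hab t s ht hs)) hb ha s₀ hs₀

lemma permMat_mul_apply {n : ℕ} (π : Equiv.Perm (Fin n)) (A : Matrix (Fin n) (Fin n) ℂ)
    (p q : Fin n) : (permMat π * A) p q = A (π⁻¹ p) q := by
  simp only [permMat, Matrix.mul_apply, Matrix.of_apply, ite_mul, one_mul, zero_mul]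
  rw [Finset.sum_eq_single (π⁻¹ p)]
  · simp
  · intro r _ hr
    rw [if_neg]
    intro h
    exact hr (by rw [h, ← Equiv.Perm.mul_apply, inv_mul_cancel, Equiv.Perm.one_apply])
  · simp

lemma mul_permMat_apply {n : ℕ} (A : Matrix (Fin n) (Fin n) ℂ) (π : Equiv.Perm (Fin n))
    (p q : Fin n) : (A * permMat π) p q = A p (π q) := by
  simp only [permMat, Matrix.mul_apply, Matrix.of_apply, mul_ite, mul_one, mul_zero]
  rw [Finset.sum_eq_single (π q)]
  · simp
  · intro r _ hr; rw [if_neg hr]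
  · simp

lemma permMat_one {n : ℕ} : permMat (1 : Equiv.Perm (Fin n)) = 1 := by
  ext p q
  simp [permMat, Matrix.one_apply]
  congr

lemma permMat_mul {n : ℕ} (π ρ : Equiv.Perm (Fin n)) :
    permMat (π * ρ) = permMat π * permMat ρ := by
  ext p q
  rw [mul_permMat_apply]
  simp [permMat]
  congr

lemma conj_entry {n : ℕ} {σ : Equiv.Perm (Fin n)} (hσ2 : σ * σ = 1)
    (A : Matrix (Fin n) (Fin n) ℂ) (p q : Fin n) :
    (permMat σ * A * permMat σ) p q = A (σ p) (σ q) := by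
  have hinv : σ⁻¹ = σ := inv_eq_of_mul_eq_one_right hσ2
  rw [mul_permMat_apply, permMat_mul_apply, hinv]

lemma conj_uSwap {n : ℕ} {σ : Equiv.Perm (Fin n)} (hσ2 : σ * σ = 1)
    (c : ℝ → Matrix (Fin 2) (Fin 2) ℂ) (x y : Fin n) (θ : ℝ) :
    permMat σ * uSwap c x y θ * permMat σ = uSwap c (σ x) (σ y) θ := by
  have hfix : ∀ z, σ (σ z) = z := by
    intro z
    have := congrArg (fun π : Equiv.Perm (Fin n) => π z) hσ2
    simpa using this
  have key : ∀ u v : Fin n, (σ u = v) ↔ (u = σ v) := by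
    intro u v
    constructor
    · rintro rfl; rw [hfix]
    · rintro rfl; rw [hfix]
  by_cases hxy : x = y
  · subst hxy
    rw [uSwap, if_pos rfl, uSwap, if_pos rfl, mul_one, ← permMat_mul, hσ2, permMat_one]
  · have hxy' : σ x ≠ σ y := fun h => hxy (σ.injective h)
    ext p q
    rw [conj_entry hσ2]
    simp only [uSwap, if_neg hxy, if_neg hxy', Matrix.of_apply]
    simp only [key, hfix]

lemma conj_list {n : ℕ} (P : Matrix (Fin n) (Fin n) ℂ) (hP : P * P = 1) :
    ∀ l : List (Matrix (Fin n) (Fin n) ℂ),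
      P * l.prod * P = (l.map fun A => P * A * P).prod := by
  intro l
  induction l with
  | nil => simp [hP]
  | cons A l ih =>
    rw [List.prod_cons, List.map_cons, List.prod_cons, ← ih]
    have : P * A * P * (P * l.prod * P) = P * A * (P * P) * l.prod * P := by
      simp only [mul_assoc]
    rw [this, hP, mul_one, mul_assoc P A]

set_option maxHeartbeats 1600000 in
theorem stmt_13 (N n k i : ℕ) (hN : 1 ≤ N) (hn : 1 ≤ n)
    (c : ℝ → Matrix (Fin 2) (Fin 2) ℂ)
    (hc0 : c 0 = 1) (hc1 : c 1 = !![0, 1; 1, 0])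
    (hcU : ∀ θ : ℝ, 0 ≤ θ → θ ≤ 1 → c θ ∈ Matrix.unitaryGroup (Fin 2) ℂ)
    (hk : N ≤ k) (hki : k ≤ i - N) (hin : i ≤ n - N)
    (ξ : ℝ) (hξ0 : 0 ≤ ξ) (hξ1 : ξ ≤ 1) :
    uNN n N c k n hN hk (by omega) le_rfl ξ =
      permMat (sigmaNN n N i n hN (by omega) (by omega) le_rfl) *
        uNN n N c k i hN hk (by omega) (by omega) ξ *
        permMat (sigmaNN n N i n hN (by omega) (by omega) le_rfl) := by
  have hbound : k + N ≤ i ∧ i + N ≤ n := by omega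
  set a : ℕ → Fin n := fun s => ⟨i - N + min s (N - 1), by omega⟩ with ha_def
  set b : ℕ → Fin n := fun s => ⟨n - N + min s (N - 1), by omega⟩ with hb_def
  have haval : ∀ s, s < N → (a s : ℕ) = i - N + s := by
    intro s hs
    show i - N + min s (N - 1) = i - N + s
    omega
  have hbval : ∀ s, s < N → (b s : ℕ) = n - N + s := by
    intro s hs
    show n - N + min s (N - 1) = n - N + s
    omega
  have hab : ∀ s t, s < N → t < N → a s ≠ b t := by
    intro s t hs ht
    apply Fin.ne_of_val_ne
    rw [haval s hs, hbval t ht]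
    omega
  have hainj : ∀ s t, s < N → t < N → s ≠ t → a s ≠ a t := by
    intro s t hs ht hst
    apply Fin.ne_of_val_ne
    rw [haval s hs, haval t ht]
    omega
  have hbinj : ∀ s t, s < N → t < N → s ≠ t → b s ≠ b t := by
    intro s t hs ht hst
    apply Fin.ne_of_val_ne
    rw [hbval s hs, hbval t ht]
    omega
  set σ : Equiv.Perm (Fin n) :=
    (List.ofFn fun s : Fin N => Equiv.swap (a (s : ℕ)) (b (s : ℕ))).prod with hσ_def
  have hσeq : sigmaNN n N i n hN (by omega) (by omega) le_rfl = σ := by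
    rw [hσ_def]
    unfold sigmaNN
    refine congrArg List.prod (congrArg List.ofFn (funext fun s => ?_))
    congr 1
    · exact Fin.ext (haval (s : ℕ) s.2).symm
    · exact Fin.ext (hbval (s : ℕ) s.2).symm
  have hσ2 : σ * σ = 1 := by
    ext x
    simp only [Equiv.Perm.mul_apply, Equiv.Perm.one_apply]
    by_cases hA : i - N ≤ (x : ℕ) ∧ (x : ℕ) < i
    · have hx : x = a ((x : ℕ) - (i - N)) := Fin.ext (by rw [haval _ (by omega)]; omega)
      rw [hσ_def, hx, prodSwap_move N a b hab hainj hbinj _ (by omega),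
        prodSwap_move' N a b hab hainj hbinj _ (by omega)]
    · by_cases hB : n - N ≤ (x : ℕ)
      · have hx : x = b ((x : ℕ) - (n - N)) :=
          Fin.ext (by rw [hbval _ (by have := x.2; omega)]; have := x.2; omega)
        rw [hσ_def, hx, prodSwap_move' N a b hab hainj hbinj _ (by have := x.2; omega),
          prodSwap_move N a b hab hainj hbinj _ (by have := x.2; omega)]
      · have hfix : σ x = x := by
          rw [hσ_def]
          exact prodSwap_fix N a b x
            (fun s hs => Fin.ne_of_val_ne (by rw [haval s hs]; omega))
            (fun s hs => Fin.ne_of_val_ne (by rw [hbval s hs]; omega))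
        rw [hfix, hfix]
  have hPP : permMat σ * permMat σ = 1 := by
    rw [← permMat_mul, hσ2, permMat_one]
  rw [hσeq]
  unfold uNN
  rw [conj_list _ hPP, List.map_ofFn]
  refine congrArg List.prod (congrArg List.ofFn (funext fun s => ?_))
  simp only [Function.comp_apply]
  rw [conj_uSwap hσ2]
  have h1 : σ (⟨k - N + (s : ℕ), by have := s.2; omega⟩ : Fin n)
      = ⟨k - N + (s : ℕ), by have := s.2; omega⟩ := by
    rw [hσ_def]
    exact prodSwap_fix N a b _
      (fun t ht => Fin.ne_of_val_ne (by rw [haval t ht]; have := s.2; simp; omega))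
      (fun t ht => Fin.ne_of_val_ne (by rw [hbval t ht]; have := s.2; simp; omega))
  have h2 : σ (⟨i - N + (s : ℕ), by have := s.2; omega⟩ : Fin n)
      = ⟨n - N + (s : ℕ), by have := s.2; omega⟩ := by
    have hx : (⟨i - N + (s : ℕ), by have := s.2; omega⟩ : Fin n) = a (s : ℕ) :=
      Fin.ext (haval (s : ℕ) s.2).symm
    rw [hσ_def, hx, prodSwap_move N a b hab hainj hbinj _ s.2]
    exact Fin.ext (hbval (s : ℕ) s.2)
  rw [h1, h2]
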